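/- Let k, ℓ be nonzero integers with |k| > |ℓ|, and let α(s) = arccos(1 − 2·ln((k²/ℓ²)·sin²s + cos²s)/ln(k²/ℓ²)). Then ∫₀^{π/2} (k²·tan s + ℓ²·cot s)·α′(s)²·sin²α(s) ds = 8·(k² − ℓ²)/ln(k²/ℓ²). Consequently the reduced σ₂-energy of this configuration on the round 3-sphere of radius R equals 16π²·(k² − ℓ²)/(R·ln(k²/ℓ²)). -/

import Mathlib

open Real Set intervalIntegral

set_option maxHeartbeats 1000000

-- pointwise computation of the integrand on (0, π/2)
lemma hopf_point (a b : ℝ) (hb : 0 < b) (hab : b < a) {s : ℝ} (hs : s ∈ Ioo 0 (π/2)) :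
    (a * tan s + b * cot s) *
      (deriv (fun s => arccos (1 - 2 * Real.log ((a / b) * sin s ^ 2 + cos s ^ 2)
        / Real.log (a / b))) s)^2 *
      sin (arccos (1 - 2 * Real.log ((a / b) * sin s ^ 2 + cos s ^ 2) / Real.log (a / b)))^2
    = 16 * (a - b)^2 / (b * (Real.log (a / b))^2) *
        (sin s * cos s / ((a / b) * sin s ^ 2 + cos s ^ 2)) := by
  obtain ⟨hs0, hs2⟩ := hs
  have hc : 1 < a / b := (one_lt_div hb).2 hab
  have hL : 0 < Real.log (a / b) := Real.log_pos hc
  have hsin : 0 < sin s := sin_pos_of_pos_of_lt_pi hs0 (by linarith [pi_pos])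
  have hcos : 0 < cos s := cos_pos_of_mem_Ioo ⟨by linarith [pi_pos], hs2⟩
  set c := a / b with hcdef
  set L := Real.log c with hLdef
  have hu1 : 1 < c * sin s ^ 2 + cos s ^ 2 := by
    nlinarith [sin_sq_add_cos_sq s, mul_pos hsin hsin]
  have huc : c * sin s ^ 2 + cos s ^ 2 < c := by
    nlinarith [sin_sq_add_cos_sq s, mul_pos hcos hcos]
  have hupos : (0:ℝ) < c * sin s ^ 2 + cos s ^ 2 := by linarith
  set u := c * sin s ^ 2 + cos s ^ 2 with hudef
  have hlogu0 : 0 < Real.log u := Real.log_pos hu1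
  have hloguL : Real.log u < L := Real.log_lt_log hupos huc
  set x := 1 - 2 * Real.log u / L with hxdef
  have hx1 : -1 < x := by
    have : 2 * Real.log u / L < 2 := by rw [div_lt_iff₀ hL]; linarith
    simp only [hxdef]; linarith
  have hx2 : x < 1 := by
    have : 0 < 2 * Real.log u / L := by positivity
    simp only [hxdef]; linarith
  have hq : 0 < 1 - x ^ 2 := by nlinarith
  -- derivative of u
  have hu' : HasDerivAt (fun s => c * sin s ^ 2 + cos s ^ 2)
      ((c - 1) * (2 * sin s * cos s)) s := by
    have h1 := ((Real.hasDerivAt_sin s).pow 2).const_mul c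
    have h2 := (Real.hasDerivAt_cos s).pow 2
    refine (h1.add h2).congr_deriv ?_
    push_cast
    ring
  have hx' : HasDerivAt (fun s => 1 - 2 * Real.log ((a / b) * sin s ^ 2 + cos s ^ 2) / Real.log (a / b))
      (-(2 * ((c - 1) * (2 * sin s * cos s) / u) / L)) s := by
    have hlog := hu'.log (ne_of_gt hupos)
    exact ((hlog.const_mul 2).div_const L).const_sub 1
  have hA : HasDerivAt (fun s => arccos (1 - 2 * Real.log ((a / b) * sin s ^ 2 + cos s ^ 2)
      / Real.log (a / b)))
      (-(1 / Real.sqrt (1 - x ^ 2)) * (-(2 * ((c - 1) * (2 * sin s * cos s) / u) / L))) s := by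
    have := (Real.hasDerivAt_arccos (ne_of_gt hx1) (ne_of_lt hx2)).comp s hx'
    exact this
  rw [hA.deriv]
  have hsq : Real.sqrt (1 - x ^ 2) ^ 2 = 1 - x ^ 2 := Real.sq_sqrt hq.le
  have hsinx : sin (arccos (1 - 2 * Real.log ((a / b) * sin s ^ 2 + cos s ^ 2) / Real.log (a / b))) ^ 2
      = 1 - x ^ 2 := by
    rw [Real.sin_arccos]
    exact hsq
  rw [hsinx, Real.tan_eq_sin_div_cos, Real.cot_eq_cos_div_sin]
  have hsqrt_ne : Real.sqrt (1 - x ^ 2) ≠ 0 := by positivity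
  have hq' : (1 - x ^ 2) ≠ 0 := ne_of_gt hq
  have key : (-(1 / Real.sqrt (1 - x ^ 2)) * (-(2 * ((c - 1) * (2 * sin s * cos s) / u) / L))) ^ 2
      = (2 * ((c - 1) * (2 * sin s * cos s) / u) / L) ^ 2 / (1 - x ^ 2) := by
    rw [mul_pow, neg_sq, neg_sq, div_pow, one_pow, hsq]
    ring
  rw [key]
  have hune : u ≠ 0 := ne_of_gt hupos
  have hLne : L ≠ 0 := ne_of_gt hL
  have hbne : b ≠ 0 := ne_of_gt hb
  have hsne : sin s ≠ 0 := ne_of_gt hsin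
  have hcne : cos s ≠ 0 := ne_of_gt hcos
  have hw : a * (sin s / cos s) + b * (cos s / sin s) = b * u / (sin s * cos s) := by
    rw [hudef, hcdef]; field_simp
  have hc1 : c - 1 = (a - b) / b := by rw [hcdef]; field_simp
  rw [mul_assoc, div_mul_cancel₀ _ hq', hw, hc1]
  clear_value x u L c
  field_simp
  ring

lemma hopf_ftc (a b : ℝ) (hb : 0 < b) (hab : b < a) :
    ∫ s in (0:ℝ)..(π/2), 16 * (a - b)^2 / (b * (Real.log (a / b))^2) *
      (sin s * cos s / ((a / b) * sin s ^ 2 + cos s ^ 2)) = 8 * (a - b) / Real.log (a / b) := by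
  have hc : 1 < a / b := (one_lt_div hb).2 hab
  have hL : 0 < Real.log (a / b) := Real.log_pos hc
  have hupos : ∀ s : ℝ, 0 < (a / b) * sin s ^ 2 + cos s ^ 2 := fun s => by
    nlinarith [sin_sq_add_cos_sq s, sq_nonneg (sin s)]
  have hG : ∀ s ∈ uIcc (0:ℝ) (π/2),
      HasDerivAt (fun s => 8 * (a - b) / (Real.log (a / b))^2 *
        Real.log ((a / b) * sin s ^ 2 + cos s ^ 2))
      (16 * (a - b)^2 / (b * (Real.log (a / b))^2) *
        (sin s * cos s / ((a / b) * sin s ^ 2 + cos s ^ 2))) s := by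
    intro s _
    have hu' : HasDerivAt (fun s => (a / b) * sin s ^ 2 + cos s ^ 2)
        (((a / b) - 1) * (2 * sin s * cos s)) s := by
      have h1 := ((Real.hasDerivAt_sin s).pow 2).const_mul (a / b)
      have h2 := (Real.hasDerivAt_cos s).pow 2
      refine (h1.add h2).congr_deriv ?_
      push_cast
      ring
    have h3 := (hu'.log (ne_of_gt (hupos s))).const_mul (8 * (a - b) / (Real.log (a / b))^2)
    refine h3.congr_deriv ?_
    have hune := ne_of_gt (hupos s)
    have h1 : (a / b) - 1 = (a - b) / b := by field_simp
    rw [h1]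
    ring
  have hInt : IntervalIntegrable (fun s => 16 * (a - b)^2 / (b * (Real.log (a / b))^2) *
      (sin s * cos s / ((a / b) * sin s ^ 2 + cos s ^ 2))) MeasureTheory.volume 0 (π/2) := by
    apply Continuous.intervalIntegrable
    exact continuous_const.mul ((continuous_sin.mul continuous_cos).div
      (by continuity) fun s => ne_of_gt (hupos s))
  rw [intervalIntegral.integral_eq_sub_of_hasDerivAt hG hInt]
  simp only [Real.sin_pi_div_two, Real.cos_pi_div_two, Real.sin_zero, Real.cos_zero]
  norm_num [Real.log_one]
  field_simp

theorem stmt_3 (k l : ℤ) (hk : k ≠ 0) (hl : l ≠ 0) (hkl : |k| > |l|)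
    (α : ℝ → ℝ)
    (hα : α = fun s => arccos (1 - 2 * Real.log (((k : ℝ)^2 / (l : ℝ)^2) * sin s ^ 2 + cos s ^ 2)
      / Real.log ((k : ℝ)^2 / (l : ℝ)^2)))
    (R : ℝ) (hR : 0 < R) :
    (∫ s in (0:ℝ)..(π/2),
        ((k : ℝ)^2 * tan s + (l : ℝ)^2 * cot s) * (deriv α s)^2 * sin (α s)^2)
      = 8 * ((k : ℝ)^2 - (l : ℝ)^2) / Real.log ((k : ℝ)^2 / (l : ℝ)^2) ∧
    (2 * π^2 / R) * (∫ s in (0:ℝ)..(π/2),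
        ((k : ℝ)^2 * tan s + (l : ℝ)^2 * cot s) * (deriv α s)^2 * sin (α s)^2)
      = 16 * π^2 * ((k : ℝ)^2 - (l : ℝ)^2) / (R * Real.log ((k : ℝ)^2 / (l : ℝ)^2)) := by
  subst hα
  beta_reduce
  have hlne : (l : ℝ) ≠ 0 := Int.cast_ne_zero.2 hl
  have hb : (0:ℝ) < (l : ℝ)^2 := by positivity
  have hab : (l : ℝ)^2 < (k : ℝ)^2 := by
    have h1 : ((|l| : ℤ) : ℝ) < ((|k| : ℤ) : ℝ) := Int.cast_lt.2 hkl
    rw [Int.cast_abs, Int.cast_abs] at h1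
    nlinarith [abs_nonneg (l : ℝ), sq_abs (k : ℝ), sq_abs (l : ℝ)]
  have hL : 0 < Real.log ((k : ℝ)^2 / (l : ℝ)^2) := Real.log_pos ((one_lt_div hb).2 hab)
  have hae : ∀ᵐ (x : ℝ) ∂MeasureTheory.volume, x ∈ Set.uIoc (0:ℝ) (π/2) →
      ((k : ℝ)^2 * tan x + (l : ℝ)^2 * cot x) *
        (deriv (fun s => arccos (1 - 2 * Real.log (((k : ℝ)^2 / (l : ℝ)^2) * sin s ^ 2 + cos s ^ 2)
          / Real.log ((k : ℝ)^2 / (l : ℝ)^2))) x)^2 *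
        sin (arccos (1 - 2 * Real.log (((k : ℝ)^2 / (l : ℝ)^2) * sin x ^ 2 + cos x ^ 2)
          / Real.log ((k : ℝ)^2 / (l : ℝ)^2)))^2
      = 16 * ((k : ℝ)^2 - (l : ℝ)^2)^2 / ((l : ℝ)^2 * (Real.log ((k : ℝ)^2 / (l : ℝ)^2))^2) *
          (sin x * cos x / (((k : ℝ)^2 / (l : ℝ)^2) * sin x ^ 2 + cos x ^ 2)) := by
    have h2 : ∀ᵐ (x : ℝ) ∂MeasureTheory.volume, x ∉ ({π/2} : Set ℝ) :=
      MeasureTheory.compl_mem_ae_iff.mpr (MeasureTheory.measure_singleton _)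
    filter_upwards [h2] with x hx hmem
    rw [Set.uIoc_of_le (by positivity : (0:ℝ) ≤ π/2)] at hmem
    exact hopf_point _ _ hb hab ⟨hmem.1,
      lt_of_le_of_ne hmem.2 fun h => hx (by simp [h])⟩
  have hI := (intervalIntegral.integral_congr_ae hae).trans (hopf_ftc _ _ hb hab)
  refine ⟨hI, ?_⟩
  rw [hI]
  field_simp
  ring
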